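/- arXiv:2401.16687 — 3 statements merged into one kernel-verified Lean document; each statement's English description precedes it below -/
import Mathlib

section
/- Let v ∈ R^d with d ≥ 1, and let S ⊆ {1,...,d} be a set of k indices with the k largest absolute values of coordinates of v (k ≤ d). Let top_S(v) denote v restricted to S (zero elsewhere). Then ‖v − top_S(v)‖² ≤ (1 − k/d)‖v‖². -/
/-- Top-k compressor contraction bound: `‖v − top_S(v)‖² ≤ (1 − k/d)‖v‖²`. -/
theorem topk_contraction {d k : ℕ} (hd : 1 ≤ d) (hk : k ≤ d)
    (v : EuclideanSpace ℝ (Fin d)) (S : Finset (Fin d)) (hcard : S.card = k)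
    (htop : ∀ i ∈ S, ∀ j ∉ S, |v j| ≤ |v i|) :
    ‖v - (show EuclideanSpace ℝ (Fin d) from WithLp.toLp 2 (fun i => if i ∈ S then v i else 0))‖ ^ 2 ≤
      (1 - (k : ℝ) / d) * ‖v‖ ^ 2 := by
  have hdpos : (0:ℝ) < d := by exact_mod_cast hd
  have hnorm : ∀ x : EuclideanSpace ℝ (Fin d), ‖x‖ ^ 2 = ∑ i, x i ^ 2 := by
    intro x
    rw [EuclideanSpace.norm_eq, Real.sq_sqrt (by positivity)]
    simp [sq_abs]
  set A := ∑ j ∈ Sᶜ, v j ^ 2 with hAdef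
  set B := ∑ i ∈ S, v i ^ 2 with hBdef
  have hApos : 0 ≤ A := Finset.sum_nonneg fun _ _ => sq_nonneg _
  have hBpos : 0 ≤ B := Finset.sum_nonneg fun _ _ => sq_nonneg _
  have hA : ‖v - (show EuclideanSpace ℝ (Fin d) from WithLp.toLp 2 (fun i => if i ∈ S then v i else 0))‖ ^ 2 = A := by
    rw [hnorm]
    have h1 : ∀ i : Fin d,
        ((v - (show EuclideanSpace ℝ (Fin d) from WithLp.toLp 2 (fun i => if i ∈ S then v i else 0))) i) ^ 2
        = if i ∈ Sᶜ then v i ^ 2 else 0 := by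
      intro i
      by_cases h : i ∈ S <;> simp [h]
    rw [Finset.sum_congr rfl fun i _ => h1 i, Finset.sum_ite_mem, Finset.univ_inter]
  have hN : ‖v‖ ^ 2 = A + B := by
    rw [hnorm, hAdef, hBdef, Finset.sum_compl_add_sum]
  have hcc : (Sᶜ.card : ℝ) = (d : ℝ) - k := by
    rw [Finset.card_compl, hcard, Fintype.card_fin]
    exact_mod_cast (Nat.cast_sub hk : ((d - k : ℕ) : ℝ) = d - k)
  have key : (k : ℝ) * A ≤ ((d : ℝ) - k) * B := by
    have h2 : ∀ j ∈ Sᶜ, ∀ i ∈ S, v j ^ 2 ≤ v i ^ 2 := by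
      intro j hj i hi
      have := htop i hi j (Finset.mem_compl.mp hj)
      calc v j ^ 2 = |v j| ^ 2 := (sq_abs _).symm
        _ ≤ |v i| ^ 2 := by gcongr
        _ = v i ^ 2 := sq_abs _
    calc (k : ℝ) * A = ∑ j ∈ Sᶜ, ∑ _i ∈ S, v j ^ 2 := by
          rw [Finset.mul_sum]
          exact Finset.sum_congr rfl fun j _ => by
            rw [Finset.sum_const, hcard, nsmul_eq_mul]
      _ ≤ ∑ j ∈ Sᶜ, ∑ i ∈ S, v i ^ 2 := by
          apply Finset.sum_le_sum
          intro j hj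
          exact Finset.sum_le_sum fun i hi => h2 j hj i hi
      _ = ((d : ℝ) - k) * B := by
          rw [Finset.sum_const, nsmul_eq_mul, hcc]
  rw [hA, hN]
  have h3 : (1 - (k:ℝ)/d) * (A + B) - A = ((d:ℝ) * B - k * (A + B)) / d := by
    field_simp
    ring
  have h4 : (0:ℝ) ≤ ((d:ℝ) * B - k * (A + B)) / d :=
    div_nonneg (by nlinarith) hdpos.le
  linarith
end

section
/- With the same setup as the top-k contraction bound: if S is a set of the k largest-magnitude coordinates of v ∈ R^d, then ‖top_S(v)‖ ≥ (1 − √(1 − k/d))‖v‖. -/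
/-- Top-k lower bound: `‖top_S(v)‖ ≥ (1 − √(1 − k/d))‖v‖`. -/
theorem topk_lower_bound {d k : ℕ} (hd : 1 ≤ d) (hk : k ≤ d)
    (v : EuclideanSpace ℝ (Fin d)) (S : Finset (Fin d)) (hcard : S.card = k)
    (htop : ∀ i ∈ S, ∀ j ∉ S, |v j| ≤ |v i|) :
    ‖(show EuclideanSpace ℝ (Fin d) from WithLp.toLp 2 (fun i => if i ∈ S then v i else 0))‖ ≥
      (1 - Real.sqrt (1 - (k : ℝ) / d)) * ‖v‖ := by
  classical
  set A := ∑ i ∈ S, (v i)^2 with hAdef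
  set B := ∑ i ∈ Sᶜ, (v i)^2 with hBdef
  have hA0 : 0 ≤ A := Finset.sum_nonneg fun i _ => sq_nonneg _
  have hB0 : 0 ≤ B := Finset.sum_nonneg fun i _ => sq_nonneg _
  have hkd : (k : ℝ) ≤ d := Nat.cast_le.mpr hk
  have hd0 : (0:ℝ) < d := by
    have : (1:ℝ) ≤ d := by exact_mod_cast hd
    linarith
  have hfrac : 0 ≤ 1 - (k:ℝ)/d := by
    rw [sub_nonneg, div_le_one hd0]; exact hkd
  have hT : ∑ i, (v i)^2 = A + B := (Finset.sum_add_sum_compl S _).symm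
  have hnormv : ‖v‖ = Real.sqrt (A + B) := by
    rw [EuclideanSpace.norm_eq, ← hT]
    congr 1
    exact Finset.sum_congr rfl fun i _ => by rw [Real.norm_eq_abs, sq_abs]
  have hnormw : ‖(show EuclideanSpace ℝ (Fin d) from WithLp.toLp 2 (fun i => if i ∈ S then v i else 0))‖
      = Real.sqrt A := by
    rw [EuclideanSpace.norm_eq]
    congr 1
    rw [hAdef, ← Finset.sum_subset (Finset.subset_univ S)]
    · exact Finset.sum_congr rfl fun i hi => by simp [hi, Real.norm_eq_abs, sq_abs]
    · intro i _ hi; simp [hi]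
  have hcompl : Sᶜ.card = d - k := by
    simp [Finset.card_compl, hcard]
  have key : (k : ℝ) * B ≤ ((d : ℝ) - k) * A := by
    have h1 : ∀ i ∈ S, B ≤ ((d:ℝ) - k) * (v i)^2 := by
      intro i hi
      calc B = ∑ j ∈ Sᶜ, (v j)^2 := rfl
        _ ≤ ∑ j ∈ Sᶜ, (v i)^2 := by
            apply Finset.sum_le_sum
            intro j hj
            have h := htop i hi j (Finset.mem_compl.mp hj)
            nlinarith [abs_nonneg (v j), sq_abs (v i), sq_abs (v j)]
        _ = ((d:ℝ) - k) * (v i)^2 := by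
            rw [Finset.sum_const, hcompl, nsmul_eq_mul, Nat.cast_sub hk]
    calc (k:ℝ) * B = ∑ _i ∈ S, B := by rw [Finset.sum_const, hcard, nsmul_eq_mul]
      _ ≤ ∑ i ∈ S, ((d:ℝ)-k) * (v i)^2 := Finset.sum_le_sum h1
      _ = ((d:ℝ)-k) * A := by rw [← Finset.mul_sum]
  have hBle : B ≤ (1 - (k:ℝ)/d) * (A + B) := by
    have heq : 1 - (k:ℝ)/d = ((d:ℝ)-k)/d := by field_simp
    rw [heq, div_mul_eq_mul_div, le_div_iff₀ hd0]
    nlinarith [key]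
  have hsB : Real.sqrt B ≤ Real.sqrt (1 - (k:ℝ)/d) * Real.sqrt (A+B) := by
    rw [← Real.sqrt_mul hfrac]
    exact Real.sqrt_le_sqrt hBle
  have htri : Real.sqrt (A+B) ≤ Real.sqrt A + Real.sqrt B := by
    nlinarith [Real.sq_sqrt hA0, Real.sq_sqrt hB0, Real.sq_sqrt (add_nonneg hA0 hB0),
      Real.sqrt_nonneg A, Real.sqrt_nonneg B, Real.sqrt_nonneg (A+B),
      mul_nonneg (Real.sqrt_nonneg A) (Real.sqrt_nonneg B)]
  rw [hnormv, hnormw, ge_iff_le, sub_mul, one_mul]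
  linarith
end

section
/- Suppose a compressor C: R^d → R^d satisfies ‖x − C(x)‖ ≤ √γ‖x‖ for all x, where γ ∈ (0,1). Define error-feedback iterates: e_0 = 0, P_t = g_t + e_t, e_{t+1} = P_t − C(P_t), where ‖g_t‖ ≤ G for all t. Then for all t, ‖e_t‖² ≤ 3γ(2+γ)G²/(2(1−γ)²). -/
/-- Error-feedback with a `γ`-contractive compressor has uniformly bounded error:
`‖e_t‖² ≤ 3γ(2+γ)G²/(2(1−γ)²)`. -/
theorem error_feedback_bound {d : ℕ}
    (C : EuclideanSpace ℝ (Fin d) → EuclideanSpace ℝ (Fin d))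
    (γ G : ℝ) (hγ0 : 0 < γ) (hγ1 : γ < 1) (hG : 0 < G)
    (hC : ∀ x, ‖x - C x‖ ≤ Real.sqrt γ * ‖x‖)
    (g e : ℕ → EuclideanSpace ℝ (Fin d))
    (hg : ∀ t, ‖g t‖ ≤ G)
    (he0 : e 0 = 0)
    (herec : ∀ t, e (t + 1) = (g t + e t) - C (g t + e t)) :
    ∀ t, ‖e t‖ ^ 2 ≤ 3 * γ * (2 + γ) * G ^ 2 / (2 * (1 - γ) ^ 2) := by
  have hden : 0 < 2 * (1 - γ) ^ 2 := by nlinarith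
  intro t
  induction t with
  | zero =>
    simp [he0]
    positivity
  | succ t ih =>
    have h1 : ‖e (t + 1)‖ ≤ Real.sqrt γ * ‖g t + e t‖ := by
      rw [herec t]; exact hC _
    have h2 : ‖g t + e t‖ ≤ ‖g t‖ + ‖e t‖ := norm_add_le _ _
    have hx0 : (0:ℝ) ≤ ‖e t‖ := norm_nonneg _
    have hg0 : (0:ℝ) ≤ ‖g t‖ := norm_nonneg _
    have hsq : ‖e (t + 1)‖ ^ 2 ≤ γ * (‖g t‖ + ‖e t‖) ^ 2 := by
      have h3 : ‖e (t + 1)‖ ≤ Real.sqrt γ * (‖g t‖ + ‖e t‖) := by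
        calc ‖e (t + 1)‖ ≤ Real.sqrt γ * ‖g t + e t‖ := h1
          _ ≤ Real.sqrt γ * (‖g t‖ + ‖e t‖) := by
              exact mul_le_mul_of_nonneg_left h2 (Real.sqrt_nonneg γ)
      have := pow_le_pow_left₀ (norm_nonneg _) h3 2
      calc ‖e (t + 1)‖ ^ 2 ≤ (Real.sqrt γ * (‖g t‖ + ‖e t‖)) ^ 2 := this
        _ = γ * (‖g t‖ + ‖e t‖) ^ 2 := by
            rw [mul_pow, Real.sq_sqrt hγ0.le]
    set x := ‖e t‖ with hxdef
    have hG' : ‖g t‖ ≤ G := hg t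
    rw [le_div_iff₀ hden] at ih ⊢
    have hkey : (1 - γ) * (3*γ*G - 2*(1-γ)*x)^2 ≥ 0 := mul_nonneg (by linarith) (sq_nonneg _)
    have hih2 : (2 + γ) * (x ^ 2 * (2 * (1 - γ) ^ 2)) ≤ (2 + γ) * (3 * γ * (2 + γ) * G ^ 2) :=
      mul_le_mul_of_nonneg_left ih (by linarith)
    have hmono : γ * (‖g t‖ + x) ^ 2 ≤ γ * (G + x) ^ 2 := by
      have : (‖g t‖ + x) ^ 2 ≤ (G + x) ^ 2 := by nlinarith
      exact mul_le_mul_of_nonneg_left this hγ0.le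
    nlinarith [hsq, hmono, hkey, hih2]
end
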